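/- Let θ be a random substitution of constant length ℓ ≥ 2. Then h_top(X_θ) > 0 if and only if there exist a permissible letter frequency vector ν and a letter a with ν_a > 0 and #θ(a) ≥ 2. -/

import Mathlib

open Filter Topology

namespace RandSub

variable {A : Type*} [DecidableEq A]

/-- Extension of a substitution to words: set of all concatenations of realisations. -/
def wordSubst (θ : A → Finset (List A)) : List A → Finset (List A)
  | [] => {([] : List A)}
  | a :: u => (θ a).biUnion fun v => (wordSubst θ u).image fun w => v ++ w

/-- Powers of a random substitution: `substPow θ m a` is the set of realisations of `θ^m(a)`. -/
def substPow (θ : A → Finset (List A)) : ℕ → A → Finset (List A)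
  | 0, a => {[a]}
  | m + 1, a => (substPow θ m a).biUnion fun v => wordSubst θ v

/-- `θ^m` applied to a word. -/
def wordSubstPow (θ : A → Finset (List A)) (m : ℕ) (u : List A) : Finset (List A) :=
  wordSubst (fun a => substPow θ m a) u

/-- A word is θ-legal if it occurs as a subword of some realisation of some `θ^k(a)`. -/
def IsLegal (θ : A → Finset (List A)) (u : List A) : Prop :=
  ∃ (a : A) (k : ℕ) (w : List A), w ∈ substPow θ k a ∧ u <:+: w

/-- The finite subword of a bi-infinite sequence `x` of length `n` starting at position `i`. -/
def wordAt {B : Type*} (x : ℤ → B) (i : ℤ) (n : ℕ) : List B :=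
  (List.range n).map fun j => x (i + j)

/-- The subshift associated with a random substitution. -/
def substShift (θ : A → Finset (List A)) : Set (ℤ → A) :=
  {x | ∀ (i : ℤ) (n : ℕ), IsLegal θ (wordAt x i n)}

/-- The language of a subshift. -/
def lang {B : Type*} (X : Set (ℤ → B)) : Set (List B) :=
  {u | ∃ x ∈ X, ∃ i : ℤ, u = wordAt x i u.length}

/-- The complexity function of a subshift. -/
noncomputable def complexity {B : Type*} (X : Set (ℤ → B)) (n : ℕ) : ℕ :=
  Nat.card {u : List B | u.length = n ∧ u ∈ lang X}

/-- Topological entropy of a subshift (defined via `limsup`; when the limit of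
`log p_X(n) / n` exists it coincides with it). -/
noncomputable def topEntropy {B : Type*} (X : Set (ℤ → B)) : ℝ :=
  Filter.atTop.limsup fun n : ℕ => Real.log (complexity X n) / n

/-- Primitivity of a random substitution. -/
def IsPrimitive (θ : A → Finset (List A)) : Prop :=
  ∃ k : ℕ, 0 < k ∧ ∀ a b : A, ∃ w ∈ substPow θ k b, a ∈ w

/-- A random substitution has constant length `ℓ`. -/
def ConstantLength (θ : A → Finset (List A)) (ℓ : ℕ) : Prop :=
  2 ≤ ℓ ∧ ∀ a : A, ∀ w ∈ θ a, w.length = ℓ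

/-- Permissible letter frequency vectors. -/
def IsPLFV (θ : A → Finset (List A)) (ν : A → ℝ) : Prop :=
  (∀ a, ν a ∈ Set.Icc (0 : ℝ) 1) ∧
  ∃ b : A, [b] ∈ lang (substShift θ) ∧
    ∃ n : ℕ → ℕ, Tendsto n atTop atTop ∧
      ∃ v : ℕ → List A, (∀ k, v k ∈ substPow θ (n k) b) ∧
        ∀ a, Tendsto (fun k => ((v k).count a : ℝ) / (v k).length) atTop (𝓝 (ν a))

end RandSub

open RandSub Filter Topology

namespace RandSubAux

variable {A : Type*} [DecidableEq A]

/-! ### wordAt basics -/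

theorem wordAt_eq {B : Type*} (x : ℤ → B) (i : ℤ) (n : ℕ) :
    wordAt x i n = List.map (fun j : ℕ => x (i + (j:ℤ))) (List.range n) := by
  show List.map _ ((List.range n) >>= fun a => pure (Nat.cast a)) = _
  rw [List.bind_eq_flatMap]
  have h : ∀ l : List ℕ, (l.flatMap fun a => (pure (Nat.cast a) : List ℤ)) = l.map Nat.cast := by
    intro l; induction l with
    | nil => rfl
    | cons a l ih => simp only [List.flatMap_cons, List.map_cons, ih]; rfl
  rw [h, List.map_map]
  rfl

@[simp] theorem wordAt_length {B : Type*} (x : ℤ → B) (i : ℤ) (n : ℕ) :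
    (wordAt x i n).length = n := by
  rw [wordAt_eq, List.length_map, List.length_range]

theorem wordAt_getElem {B : Type*} (x : ℤ → B) (i : ℤ) (n : ℕ) (j : ℕ) (hj : j < n) :
    (wordAt x i n)[j]'(by simpa using hj) = x (i + j) := by
  simp [wordAt_eq]

@[simp] theorem wordAt_zero {B : Type*} (x : ℤ → B) (i : ℤ) : wordAt x i 0 = [] := by
  rw [wordAt_eq]; rfl

theorem wordAt_succ {B : Type*} (x : ℤ → B) (i : ℤ) (n : ℕ) :
    wordAt x i (n + 1) = x i :: wordAt x (i + 1) n := by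
  rw [wordAt_eq, wordAt_eq]
  simp only [List.range_succ_eq_map, List.map_cons, List.map_map]
  refine congrArg₂ _ (by simp) (List.map_congr_left fun j _ => ?_)
  simp only [Function.comp_apply, Nat.succ_eq_add_one]
  congr 1
  push_cast; ring

theorem wordAt_one {B : Type*} (x : ℤ → B) (i : ℤ) : wordAt x i 1 = [x i] := by
  rw [wordAt_succ, wordAt_zero]

theorem wordAt_add {B : Type*} (x : ℤ → B) (i : ℤ) (p q : ℕ) :
    wordAt x i (p + q) = wordAt x i p ++ wordAt x (i + p) q := by
  induction p generalizing i with
  | zero => simp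
  | succ p ih =>
      have h : p + 1 + q = (p + q) + 1 := by ring
      rw [h, wordAt_succ, wordAt_succ, ih]
      rw [List.cons_append]
      congr 2
      push_cast; ring

theorem wordAt_drop_take {B : Type*} (x : ℤ → B) (i : ℤ) (d n n' : ℕ) (h : d + n ≤ n') :
    wordAt x (i + d) n = ((wordAt x i n').drop d).take n := by
  obtain ⟨r, hr⟩ : ∃ r, n' = d + (n + r) := ⟨n' - d - n, by omega⟩
  subst hr
  rw [wordAt_add, wordAt_add]
  have h1 : List.drop d (wordAt x i d ++ (wordAt x (i + d) n ++ wordAt x (i + d + n) r))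
      = wordAt x (i + d) n ++ wordAt x (i + d + n) r := by
    simpa using List.drop_left (wordAt x i d) _
  rw [h1]
  simpa using List.take_left (wordAt x (i + d) n) _

theorem take_drop_infix {B : Type*} (l : List B) (d n : ℕ) :
    (l.drop d).take n <:+: l := by
  refine ⟨l.take d, (l.drop d).drop n, ?_⟩
  rw [List.append_assoc, List.take_append_drop, List.take_append_drop]

theorem wordAt_infix {B : Type*} (x : ℤ → B) {i i' : ℤ} {n n' : ℕ}
    (h1 : i' ≤ i) (h2 : i + n ≤ i' + n') :
    wordAt x i n <:+: wordAt x i' n' := by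
  set d : ℕ := (i - i').toNat with hd
  have hdi : i = i' + d := by simp only [hd]; omega
  have hdn : d + n ≤ n' := by omega
  rw [hdi, wordAt_drop_take x i' d n n' hdn]
  exact take_drop_infix _ _ _


/-! ### wordSubst and substPow basics -/

variable {θ : A → Finset (List A)}

theorem mem_wordSubst_nil {s : List A} : s ∈ wordSubst θ [] ↔ s = [] := by
  simp [wordSubst]

theorem mem_wordSubst_cons {a : A} {u s : List A} :
    s ∈ wordSubst θ (a :: u) ↔ ∃ v ∈ θ a, ∃ w ∈ wordSubst θ u, s = v ++ w := by
  simp only [wordSubst, Finset.mem_biUnion, Finset.mem_image]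
  tauto

theorem wordSubst_nonempty (hne : ∀ a, (θ a).Nonempty) (u : List A) :
    (wordSubst θ u).Nonempty := by
  induction u with
  | nil => exact ⟨[], by simp [wordSubst]⟩
  | cons a u ih =>
      obtain ⟨v, hv⟩ := hne a
      obtain ⟨w, hw⟩ := ih
      exact ⟨v ++ w, mem_wordSubst_cons.2 ⟨v, hv, w, hw, rfl⟩⟩

theorem length_of_mem_wordSubst {ℓ : ℕ} (hlen : ∀ a : A, ∀ w ∈ θ a, w.length = ℓ)
    {u s : List A} (hs : s ∈ wordSubst θ u) : s.length = ℓ * u.length := by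
  induction u generalizing s with
  | nil => rw [mem_wordSubst_nil.1 hs]; simp
  | cons a u ih =>
      obtain ⟨v, hv, w, hw, rfl⟩ := mem_wordSubst_cons.1 hs
      simp [hlen a v hv, ih hw]
      ring

theorem mem_wordSubst_append {u v s : List A} :
    s ∈ wordSubst θ (u ++ v) ↔
      ∃ s1 ∈ wordSubst θ u, ∃ s2 ∈ wordSubst θ v, s = s1 ++ s2 := by
  induction u generalizing s with
  | nil =>
      rw [List.nil_append]
      constructor
      · intro hs; exact ⟨[], mem_wordSubst_nil.2 rfl, s, hs, rfl⟩
      · rintro ⟨s1, h1, s2, h2, rfl⟩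
        rw [mem_wordSubst_nil.1 h1, List.nil_append]; exact h2
  | cons a u ih =>
      rw [List.cons_append]
      constructor
      · intro hs
        obtain ⟨w, hw, t, ht, rfl⟩ := mem_wordSubst_cons.1 hs
        obtain ⟨s1, h1, s2, h2, rfl⟩ := ih.1 ht
        exact ⟨w ++ s1, mem_wordSubst_cons.2 ⟨w, hw, s1, h1, rfl⟩, s2, h2, by
          rw [List.append_assoc]⟩
      · rintro ⟨s1, h1, s2, h2, rfl⟩
        obtain ⟨w, hw, t, ht, rfl⟩ := mem_wordSubst_cons.1 h1
        exact mem_wordSubst_cons.2 ⟨w, hw, t ++ s2, ih.2 ⟨t, ht, s2, h2, rfl⟩, by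
          rw [List.append_assoc]⟩

theorem wordSubst_infix (hne : ∀ a, (θ a).Nonempty) {u U s : List A}
    (hinf : u <:+: U) (hs : s ∈ wordSubst θ u) :
    ∃ S ∈ wordSubst θ U, s <:+: S := by
  obtain ⟨p, q, rfl⟩ := hinf
  obtain ⟨sp, hsp⟩ := wordSubst_nonempty hne p
  obtain ⟨sq, hsq⟩ := wordSubst_nonempty hne q
  refine ⟨sp ++ s ++ sq, ?_, ⟨sp, sq, rfl⟩⟩
  exact mem_wordSubst_append.2 ⟨sp ++ s, mem_wordSubst_append.2 ⟨sp, hsp, s, hs, rfl⟩,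
    sq, hsq, rfl⟩

theorem card_wordSubst_cons {ℓ : ℕ} (hlen : ∀ a : A, ∀ w ∈ θ a, w.length = ℓ)
    (a : A) (u : List A) :
    (wordSubst θ (a :: u)).card = (θ a).card * (wordSubst θ u).card := by
  show ((θ a).biUnion fun v => (wordSubst θ u).image fun w => v ++ w).card = _
  have hdisj : ∀ v ∈ θ a, ∀ v' ∈ θ a, v ≠ v' →
      Disjoint ((wordSubst θ u).image fun w => v ++ w)
        ((wordSubst θ u).image fun w => v' ++ w) := by
    intro v hv v' hv' hvv'
    rw [Finset.disjoint_left]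
    intro w hw hw'
    obtain ⟨t, ht, rfl⟩ := Finset.mem_image.1 hw
    obtain ⟨t', ht', heq⟩ := Finset.mem_image.1 hw'
    have hl : v'.length = v.length := by rw [hlen a v hv, hlen a v' hv']
    exact hvv' (List.append_inj_left heq.symm hl.symm)
  rw [Finset.card_biUnion hdisj]
  have h1 : ∀ v ∈ θ a, ((wordSubst θ u).image fun w => v ++ w).card = (wordSubst θ u).card :=
    fun v _ => Finset.card_image_of_injective _ (fun w w' h => List.append_cancel_left h)
  rw [Finset.sum_congr rfl h1, Finset.sum_const, smul_eq_mul]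

theorem substPow_zero (a : A) : substPow θ 0 a = {[a]} := rfl

theorem substPow_succ (m : ℕ) (a : A) :
    substPow θ (m + 1) a = (substPow θ m a).biUnion fun v => wordSubst θ v := rfl

theorem substPow_nonempty (hne : ∀ a, (θ a).Nonempty) (k : ℕ) (a : A) :
    (substPow θ k a).Nonempty := by
  induction k with
  | zero => exact ⟨[a], by simp [substPow_zero]⟩
  | succ m ih =>
      obtain ⟨v, hv⟩ := ih
      obtain ⟨w, hw⟩ := wordSubst_nonempty hne v
      exact ⟨w, Finset.mem_biUnion.2 ⟨v, hv, hw⟩⟩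

theorem length_of_mem_substPow {ℓ : ℕ} (hlen : ∀ a : A, ∀ w ∈ θ a, w.length = ℓ)
    {k : ℕ} {a : A} {w : List A} (hw : w ∈ substPow θ k a) : w.length = ℓ ^ k := by
  induction k generalizing w with
  | zero => simp only [substPow_zero, Finset.mem_singleton] at hw; simp [hw]
  | succ m ih =>
      obtain ⟨v, hv, hw⟩ := Finset.mem_biUnion.1 hw
      rw [length_of_mem_wordSubst hlen hw, ih hv, pow_succ, mul_comm]

theorem legal_of_mem_substPow {k : ℕ} {a : A} {w : List A} (hw : w ∈ substPow θ k a) :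
    IsLegal θ w := ⟨a, k, w, hw, List.infix_refl w⟩

theorem IsLegal.of_infix {u w : List A} (h : IsLegal θ w) (hinf : u <:+: w) : IsLegal θ u := by
  obtain ⟨a, k, W, hW, hwW⟩ := h
  exact ⟨a, k, W, hW, hinf.trans hwW⟩

theorem wordSubst_subset_substPow_succ {k : ℕ} {a : A} {v : List A}
    (hv : v ∈ substPow θ k a) : wordSubst θ v ⊆ substPow θ (k + 1) a := by
  intro s hs
  exact Finset.mem_biUnion.2 ⟨v, hv, hs⟩

theorem wordSubst_pure (u : List A) :
    wordSubst (fun c : A => ({[c]} : Finset (List A))) u = {u} := by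
  induction u with
  | nil => rfl
  | cons a u ih =>
      ext s
      rw [mem_wordSubst_cons]
      simp [ih]

theorem mem_wordSubst_compose {Φ : A → Finset (List A)} {V w' w : List A}
    (h1 : w' ∈ wordSubst Φ V) (h2 : w ∈ wordSubst θ w') :
    w ∈ wordSubst (fun c => (Φ c).biUnion fun v => wordSubst θ v) V := by
  induction V generalizing w' w with
  | nil =>
      rw [mem_wordSubst_nil.1 h1] at h2
      rw [mem_wordSubst_nil.1 h2]
      exact mem_wordSubst_nil.2 rfl
  | cons c V ih =>
      obtain ⟨B, hB, rest, hrest, rfl⟩ := mem_wordSubst_cons.1 h1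
      obtain ⟨w1, hw1, w2, hw2, rfl⟩ := mem_wordSubst_append.1 h2
      exact mem_wordSubst_cons.2 ⟨w1, Finset.mem_biUnion.2 ⟨B, hB, hw1⟩, w2, ih hrest hw2, rfl⟩

theorem substPow_split {m k : ℕ} {a : A} {w : List A} (hw : w ∈ substPow θ (m + k) a) :
    ∃ V ∈ substPow θ m a, w ∈ wordSubst (fun c => substPow θ k c) V := by
  induction k generalizing w with
  | zero =>
      exact ⟨w, hw, by rw [show (fun c : A => substPow θ 0 c) = fun c => {[c]} from rfl,
        wordSubst_pure]; simp⟩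
  | succ k ih =>
      rw [show m + (k + 1) = (m + k) + 1 from rfl, substPow_succ] at hw
      obtain ⟨w', hw', hw2⟩ := Finset.mem_biUnion.1 hw
      obtain ⟨V, hV, hw'V⟩ := ih hw'
      exact ⟨V, hV, mem_wordSubst_compose hw'V hw2⟩

theorem mem_wordSubst_chunks {Φ : A → Finset (List A)} {u s : List A}
    (hs : s ∈ wordSubst Φ u) :
    ∃ L : List (List A), L.length = u.length ∧
      (∀ j, (h1 : j < L.length) → (h2 : j < u.length) → L[j] ∈ Φ u[j]) ∧ s = L.flatten := by
  induction u generalizing s with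
  | nil =>
      refine ⟨[], rfl, by simp, ?_⟩
      rw [mem_wordSubst_nil.1 hs]; rfl
  | cons a u ih =>
      obtain ⟨v, hv, w, hw, rfl⟩ := mem_wordSubst_cons.1 hs
      obtain ⟨L, hL1, hL2, rfl⟩ := ih hw
      refine ⟨v :: L, by simp [hL1], ?_, by simp⟩
      intro j h1 h2
      cases j with
      | zero => simpa using hv
      | succ j => simpa using hL2 j (by simpa using h1) (by simpa using h2)

theorem flatten_drop {L : List (List A)} {L0 : ℕ} (hall : ∀ B ∈ L, B.length = L0) (j : ℕ) :
    L.flatten.drop (j * L0) = (L.drop j).flatten := by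
  induction j generalizing L with
  | zero => simp
  | succ j ih =>
      cases L with
      | nil => simp
      | cons B L =>
          have hB : B.length = L0 := hall B (by simp)
          have : (j + 1) * L0 = B.length + j * L0 := by rw [hB]; ring
          rw [this, List.flatten_cons, List.drop_length_add_append, ih (fun C hC => hall C (by simp [hC]))]
          rfl


/-! ### Inflation -/

/-- Inflated sequence: concatenate the blocks `r j` (each of length `ℓ`). -/
def inflate (ℓ : ℕ) (d : A) (r : ℤ → List A) : ℤ → A :=
  fun n => (r (n / (ℓ:ℤ))).getD (n % (ℓ:ℤ)).toNat d

theorem inflate_block {ℓ : ℕ} (hℓ : 0 < ℓ) (d : A) (r : ℤ → List A) (j : ℤ)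
    (hr : (r j).length = ℓ) :
    wordAt (inflate ℓ d r) ((ℓ:ℤ) * j) ℓ = r j := by
  apply List.ext_getElem (by simp [hr])
  intro t h1 h2
  rw [wordAt_getElem _ _ _ t (by simpa using h1)]
  have hℓz : (ℓ:ℤ) ≠ 0 := by exact_mod_cast hℓ.ne'
  have htl : (t:ℤ) < (ℓ:ℤ) := by exact_mod_cast hr ▸ h2
  have hdiv : ((ℓ:ℤ) * j + (t:ℤ)) / (ℓ:ℤ) = j := by
    rw [add_comm, Int.add_mul_ediv_left _ _ hℓz,
      Int.ediv_eq_zero_of_lt (by positivity) htl, zero_add]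
  have hmod : ((ℓ:ℤ) * j + (t:ℤ)) % (ℓ:ℤ) = (t:ℤ) := by
    rw [add_comm, Int.add_mul_emod_self_left]
    exact Int.emod_eq_of_lt (by positivity) htl
  show (r _).getD _ d = _
  rw [hdiv, hmod, Int.toNat_natCast, List.getD_eq_getElem (r j) d h2]

theorem inflate_aligned {θ : A → Finset (List A)} {ℓ : ℕ} (hℓ : 0 < ℓ) (d : A)
    (x : ℤ → A) (r : ℤ → List A) (hr : ∀ j, (r j).length = ℓ)
    (hmem : ∀ j, r j ∈ θ (x j)) :
    ∀ (m : ℕ) (j : ℤ),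
      wordAt (inflate ℓ d r) ((ℓ:ℤ) * j) (ℓ * m) ∈ wordSubst θ (wordAt x j m) := by
  intro m
  induction m with
  | zero => intro j; simp [mem_wordSubst_nil]
  | succ m ih =>
      intro j
      have heq : wordAt (inflate ℓ d r) ((ℓ:ℤ) * j) (ℓ * (m+1))
          = r j ++ wordAt (inflate ℓ d r) ((ℓ:ℤ) * (j+1)) (ℓ * m) := by
        have hsplit : ℓ * (m + 1) = ℓ + ℓ * m := by ring
        rw [hsplit, wordAt_add, inflate_block hℓ d r j (hr j)]
        congr 2
        push_cast; ring
      rw [heq, wordAt_succ]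
      exact mem_wordSubst_cons.2 ⟨r j, hmem j, _, ih (j+1), rfl⟩

theorem inflate_flatten {ℓ : ℕ} (hℓ : 0 < ℓ) (d : A) (r : ℤ → List A)
    (hr : ∀ j, (r j).length = ℓ) :
    ∀ (m : ℕ) (j : ℤ),
      wordAt (inflate ℓ d r) ((ℓ:ℤ) * j) (ℓ * m)
        = (((List.range m).map fun t : ℕ => r (j + (t:ℤ))).flatten) := by
  intro m
  induction m with
  | zero => simp
  | succ m ih =>
      intro j
      have heq : wordAt (inflate ℓ d r) ((ℓ:ℤ) * j) (ℓ * (m+1))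
          = r j ++ wordAt (inflate ℓ d r) ((ℓ:ℤ) * (j+1)) (ℓ * m) := by
        have hsplit : ℓ * (m + 1) = ℓ + ℓ * m := by ring
        rw [hsplit, wordAt_add, inflate_block hℓ d r j (hr j)]
        congr 2
        push_cast; ring
      rw [heq, ih (j+1), List.range_succ_eq_map, List.map_cons, List.flatten_cons,
        List.map_map]
      congr 2
      · congr 1; push_cast; ring
      · refine List.map_congr_left fun t _ => ?_
        simp only [Function.comp_apply, Nat.succ_eq_add_one]
        congr 1
        push_cast; ring

theorem isLegal_of_infix {θ : A → Finset (List A)} {u w : List A} (h : IsLegal θ w)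
    (hinf : u <:+: w) : IsLegal θ u := by
  obtain ⟨a, k, W, hW, hwW⟩ := h
  exact ⟨a, k, W, hW, hinf.trans hwW⟩

theorem legal_of_mem_wordSubst_legal {θ : A → Finset (List A)} (hne : ∀ a, (θ a).Nonempty)
    {u s : List A} (hu : IsLegal θ u) (hs : s ∈ wordSubst θ u) : IsLegal θ s := by
  obtain ⟨a, k, W, hW, hinf⟩ := hu
  obtain ⟨S, hS, hsS⟩ := wordSubst_infix hne hinf hs
  exact isLegal_of_infix (legal_of_mem_substPow (wordSubst_subset_substPow_succ hW hS)) hsS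

theorem inflate_mem_substShift {θ : A → Finset (List A)} (hne : ∀ a, (θ a).Nonempty)
    {ℓ : ℕ} (hℓ : 0 < ℓ) (d : A) {x : ℤ → A} (hx : x ∈ substShift θ)
    (r : ℤ → List A) (hr : ∀ j, (r j).length = ℓ) (hmem : ∀ j, r j ∈ θ (x j)) :
    inflate ℓ d r ∈ substShift θ := by
  intro i n
  have hℓz : (ℓ:ℤ) ≠ 0 := by exact_mod_cast hℓ.ne'
  have hde : (ℓ:ℤ) * (i / (ℓ:ℤ)) + i % (ℓ:ℤ) = i := Int.mul_ediv_add_emod i (ℓ:ℤ)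
  have hm0 : 0 ≤ i % (ℓ:ℤ) := Int.emod_nonneg i hℓz
  have hm1 : i % (ℓ:ℤ) < ℓ := Int.emod_lt_of_pos i (by exact_mod_cast hℓ)
  have h1 : (ℓ:ℤ) * (i / (ℓ:ℤ)) ≤ i := by omega
  have hnl : (n:ℤ) ≤ (ℓ:ℤ) * n := by
    nlinarith [Int.natCast_nonneg n, (show (1:ℤ) ≤ (ℓ:ℤ) by exact_mod_cast hℓ)]
  have h2 : i + (n:ℤ) ≤ (ℓ:ℤ) * (i / (ℓ:ℤ)) + ((ℓ * (n + 1) : ℕ) : ℤ) := by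
    have : ((ℓ * (n + 1) : ℕ) : ℤ) = (ℓ:ℤ) * n + (ℓ:ℤ) := by push_cast; ring
    omega
  have hinf := wordAt_infix (inflate ℓ d r) h1 h2
  have hmem2 := inflate_aligned hℓ d x r hr hmem (n+1) (i / (ℓ:ℤ))
  exact isLegal_of_infix (legal_of_mem_wordSubst_legal hne (hx (i / (ℓ:ℤ)) (n+1)) hmem2) hinf

theorem mem_lang_substPow {θ : A → Finset (List A)} (hne : ∀ a, (θ a).Nonempty)
    {ℓ : ℕ} (hℓ : 0 < ℓ) (hlen : ∀ a : A, ∀ w ∈ θ a, w.length = ℓ) {b : A}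
    (hb : [b] ∈ lang (substShift θ)) :
    ∀ m, ∀ s ∈ substPow θ m b, s ∈ lang (substShift θ) := by
  intro m
  induction m with
  | zero =>
      intro s hs
      rw [substPow_zero, Finset.mem_singleton] at hs
      rwa [hs]
  | succ m ih =>
      intro s hs
      obtain ⟨v, hv, hsv⟩ := Finset.mem_biUnion.1 hs
      obtain ⟨x, hx, i0, hveq⟩ := ih v hv
      obtain ⟨L, hL1, hL2, hsL⟩ := mem_wordSubst_chunks hsv
      classical
      set r : ℤ → List A := fun j =>
        if h : 0 ≤ j - i0 ∧ (j - i0).toNat < L.length then L[(j - i0).toNat]'(h.2)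
        else (hne (x j)).choose with hrdef
      have hrmem : ∀ j, r j ∈ θ (x j) := by
        intro j
        by_cases h : 0 ≤ j - i0 ∧ (j - i0).toNat < L.length
        · have ht : (j - i0).toNat < v.length := by omega
          have hv2 : v[(j - i0).toNat]'(ht) = x (i0 + (((j - i0).toNat : ℕ) : ℤ)) := by
            rw [List.getElem_of_eq hveq ht]
            exact wordAt_getElem x i0 v.length _ (by omega)
          have hji : (i0 + (((j - i0).toNat : ℕ) : ℤ)) = j := by omega
          have h2 := hL2 _ h.2 ht
          rw [hv2, hji] at h2
          simpa only [hrdef, dif_pos h] using h2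
        · simp only [hrdef, dif_neg h]
          exact (hne (x j)).choose_spec
      have hrlen : ∀ j, (r j).length = ℓ := fun j => hlen (x j) (r j) (hrmem j)
      have hy : inflate ℓ b r ∈ substShift θ :=
        inflate_mem_substShift hne hℓ b hx r hrlen hrmem
      refine ⟨inflate ℓ b r, hy, (ℓ:ℤ) * i0, ?_⟩
      have hslen : s.length = ℓ * v.length := length_of_mem_wordSubst hlen hsv
      have hmapL : (List.range v.length).map (fun t : ℕ => r (i0 + (t:ℤ))) = L := by
        apply List.ext_getElem (by simp [hL1])
        intro t h1 h2
        simp only [List.getElem_map, List.getElem_range]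
        have ht : t < L.length := h2
        simp only [hrdef]
        rw [dif_pos (by constructor <;> omega)]
        congr 1
        omega
      rw [hslen, inflate_flatten hℓ b r hrlen v.length i0, hmapL, hsL]


/-! ### Compactness via ultrafilters -/

theorem ultra_exists_const {Ω : Type*} [DecidableEq Ω] (U : Ultrafilter ℕ) (s : Finset Ω)
    (g : ℕ → Ω) :
    {m | g m ∈ s} ∈ U → ∃ ω ∈ s, {m | g m = ω} ∈ U := by
  classical
  induction s using Finset.induction_on with
  | empty =>
      intro h
      have h0 : (∅ : Set ℕ) ∈ U := by simpa using h
      exact (Ultrafilter.empty_notMem h0).elim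
  | @insert a s ha ih =>
      intro h
      have hsplit : {m | g m = a} ∪ {m | g m ∈ s} ∈ U := by
        refine Filter.mem_of_superset h ?_
        intro m hm
        rcases Finset.mem_insert.1 hm with h1 | h2
        · exact Or.inl h1
        · exact Or.inr h2
      rcases Ultrafilter.union_mem_iff.1 hsplit with h1 | h2
      · exact ⟨a, Finset.mem_insert_self a s, h1⟩
      · obtain ⟨ω, hω, hU⟩ := ih h2
        exact ⟨ω, Finset.mem_insert_of_mem hω, hU⟩

theorem limit_point {θ : A → Finset (List A)} [Fintype A] (c : A) (y : ℕ → ℤ → A)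
    (hleg : ∀ (i : ℤ) (n : ℕ), ∀ᶠ m in atTop, IsLegal θ (wordAt (y m) i n))
    (hc : ∀ᶠ m in atTop, y m 0 = c) :
    ∃ x ∈ substShift θ, x 0 = c := by
  classical
  let U := Ultrafilter.of (atTop : Filter ℕ)
  have hU : (U : Filter ℕ) ≤ atTop := Ultrafilter.of_le _
  have hx : ∀ j : ℤ, ∃ v : A, {m | y m j = v} ∈ U := by
    intro j
    have h : {m | y m j ∈ (Finset.univ : Finset A)} ∈ U := by
      simp only [Finset.mem_univ, Set.setOf_true]
      exact Filter.univ_mem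
    obtain ⟨v, _, hv⟩ := ultra_exists_const U _ _ h
    exact ⟨v, hv⟩
  choose x hxv using hx
  have hword : ∀ (i : ℤ) (n : ℕ), ∀ᶠ m in (U : Filter ℕ), wordAt (y m) i n = wordAt x i n := by
    intro i n
    have hall : ∀ᶠ m in (U : Filter ℕ), ∀ t : Fin n, y m (i + (t:ℕ)) = x (i + (t:ℕ)) :=
      Filter.eventually_all.2 fun t => hxv (i + (t:ℕ))
    refine hall.mono fun m hm => ?_
    rw [wordAt_eq, wordAt_eq]
    refine List.map_congr_left fun t ht => ?_
    exact hm ⟨t, List.mem_range.1 ht⟩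
  refine ⟨x, ?_, ?_⟩
  · intro i n
    have h1 := hword i n
    have h2 : ∀ᶠ m in (U : Filter ℕ), IsLegal θ (wordAt (y m) i n) := hU (hleg i n)
    obtain ⟨m, hm1, hm2⟩ := (h1.and h2).exists
    rwa [hm1] at hm2
  · have h1 := hword 0 1
    have h2 : ∀ᶠ m in (U : Filter ℕ), y m 0 = c := hU hc
    obtain ⟨m, hm1, hm2⟩ := (h1.and h2).exists
    rw [wordAt_one, wordAt_one] at hm1
    injection hm1 with h3 _
    rw [← h3, hm2]

/-- Bi-extendable letters. -/
def ExtLetter (θ : A → Finset (List A)) (c : A) : Prop :=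
  ∀ m : ℕ, ∃ (v : List A) (p : ℕ) (h : p < v.length),
    IsLegal θ v ∧ m ≤ p ∧ p + m < v.length ∧ v[p] = c

theorem wordAt_getD (w : List A) (d : A) (p i : ℤ) (n : ℕ) (h0 : 0 ≤ p + i)
    (h1 : (p + i).toNat + n ≤ w.length) :
    wordAt (fun j => w.getD (p + j).toNat d) i n = (w.drop (p + i).toNat).take n := by
  apply List.ext_getElem (by simp; omega)
  intro t ht1 ht2
  rw [wordAt_getElem _ _ _ t (by simpa using ht1)]
  show w.getD (p + (i + (t:ℤ))).toNat d = _
  have hidx : (p + (i + (t:ℤ))).toNat = (p + i).toNat + t := by omega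
  have hlt : (p + i).toNat + t < w.length := by
    have := ht2
    simp at this
    omega
  rw [hidx, List.getD_eq_getElem w d hlt, List.getElem_take, List.getElem_drop]

theorem lang_of_extLetter {θ : A → Finset (List A)} [Fintype A] {c : A}
    (hext : ExtLetter θ c) : [c] ∈ lang (substShift θ) := by
  choose v p hp hleg hm1 hm2 hvc using hext
  set y : ℕ → ℤ → A := fun m j => (v m).getD ((p m : ℤ) + j).toNat c with hydef
  have hleg' : ∀ (i : ℤ) (n : ℕ), ∀ᶠ m in atTop, IsLegal θ (wordAt (y m) i n) := by
    intro i n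
    rw [Filter.eventually_atTop]
    refine ⟨n + i.natAbs, fun m hm => ?_⟩
    have h0 : 0 ≤ (p m : ℤ) + i := by
      have := hm1 m
      omega
    have h1 : ((p m : ℤ) + i).toNat + n ≤ (v m).length := by
      have := hm1 m
      have := hm2 m
      omega
    rw [hydef]
    rw [wordAt_getD (v m) c (p m) i n h0 h1]
    exact isLegal_of_infix (hleg m) (take_drop_infix _ _ _)
  have hc : ∀ᶠ m in atTop, y m 0 = c := by
    refine Filter.Eventually.of_forall fun m => ?_
    rw [hydef]
    show (v m).getD ((p m : ℤ) + 0).toNat c = c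
    have : ((p m : ℤ) + 0).toNat = p m := by omega
    rw [this, List.getD_eq_getElem (v m) c (hp m), hvc m]
  obtain ⟨x, hx, hx0⟩ := limit_point c y hleg' hc
  exact ⟨x, hx, 0, by rw [show ([c] : List A).length = 1 from rfl, wordAt_one, hx0]⟩


/-! ### Decomposition of language words into two inflation blocks -/

theorem length_flatten_const {L : List (List A)} {L0 : ℕ} (hall : ∀ B ∈ L, B.length = L0) :
    L.flatten.length = L.length * L0 := by
  induction L with
  | nil => simp
  | cons B L ih =>
      simp only [List.flatten_cons, List.length_append, List.length_cons]
      rw [hall B (by simp), ih (fun C hC => hall C (by simp [hC]))]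
      ring

theorem decomp [Fintype A] {θ : A → Finset (List A)} (hne : ∀ a, (θ a).Nonempty)
    {ℓ : ℕ} (hℓ : 2 ≤ ℓ) (hlen : ∀ a : A, ∀ w ∈ θ a, w.length = ℓ)
    (k n : ℕ) (hn1 : 1 ≤ n) (hnk : n ≤ ℓ ^ k) {u : List A}
    (hu : u ∈ lang (substShift θ)) (hulen : u.length = n) :
    ∃ c1 c2 t B1 B2, [c1] ∈ lang (substShift θ) ∧ [c2] ∈ lang (substShift θ) ∧
      t < ℓ ^ k ∧ B1 ∈ substPow θ k c1 ∧ B2 ∈ substPow θ k c2 ∧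
      u = ((B1 ++ B2).drop t).take n := by
  classical
  obtain ⟨x, hx, i, hueq⟩ := hu
  rw [hulen] at hueq
  set L0 : ℕ := ℓ ^ k with hL0def
  have hL0 : 0 < L0 := pow_pos (by omega) k
  have main : ∀ m : ℕ, ∃ c1 c2 t B1 B2, t < L0 ∧ B1 ∈ substPow θ k c1 ∧
      B2 ∈ substPow θ k c2 ∧ u = ((B1 ++ B2).drop t).take n ∧
      (∃ (v : List A) (p : ℕ) (h : p < v.length),
        IsLegal θ v ∧ m ≤ p ∧ p + m < v.length ∧ v[p] = c1) ∧
      (∃ (v : List A) (p : ℕ) (h : p < v.length),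
        IsLegal θ v ∧ m ≤ p ∧ p + m < v.length ∧ v[p] = c2) := by
    intro m
    set L : ℕ := L0 * (m + 2) with hLdef
    have hLL0 : 2 * L0 ≤ L := by
      rw [hLdef]; nlinarith
    obtain ⟨a, K, W, hW, hinfU⟩ := hx (i - L) (n + 2*L)
    obtain ⟨pfx, sfx, hWeq⟩ := hinfU
    have hWlen : W.length = ℓ ^ K := length_of_mem_substPow hlen hW
    have hWlen2 : W.length = pfx.length + (n + 2*L) + sfx.length := by
      rw [← hWeq]
      simp [List.length_append]
      omega
    have hKk : k ≤ K := by
      have h1 : L0 < ℓ ^ K := by omega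
      by_contra hcon
      push_neg at hcon
      have : ℓ ^ K ≤ ℓ ^ k := Nat.pow_le_pow_right (by omega) (by omega)
      omega
    obtain ⟨r, hrK⟩ : ∃ r, K = r + k := ⟨K - k, by omega⟩
    rw [hrK] at hW
    obtain ⟨V, hV, hWV⟩ := substPow_split hW
    have hVlen : V.length = ℓ ^ r := length_of_mem_substPow hlen hV
    obtain ⟨C, hC1, hC2, hWC⟩ := mem_wordSubst_chunks hWV
    have hCall : ∀ B ∈ C, B.length = L0 := by
      intro B hB
      obtain ⟨j, hj, rfl⟩ := List.mem_iff_getElem.1 hB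
      exact length_of_mem_substPow hlen (hC2 j hj (by omega))
    have hWCL : W.length = C.length * L0 := by
      rw [hWC]; exact length_flatten_const hCall
    set s : ℕ := pfx.length + L with hsdef
    have hu2 : u = (W.drop s).take n := by
      have h1 : u = ((wordAt x (i - L) (n + 2*L)).drop L).take n := by
        rw [hueq]
        have h2 := wordAt_drop_take x (i - (L:ℤ)) L n (n + 2*L) (by omega)
        rw [← h2]
        congr 1
        ring
      rw [h1, ← hWeq, List.append_assoc, hsdef]
      rw [List.drop_length_add_append]
      rw [List.drop_append]
      have hUL : (wordAt x (i - L) (n + 2*L)).length = n + 2*L := wordAt_length _ _ _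
      rw [List.take_append]
      have e1 : L - (wordAt x (i - L) (n + 2*L)).length = 0 := by omega
      have e2 : n - ((wordAt x (i - L) (n + 2*L)).drop L).length = 0 := by
        rw [List.length_drop]; omega
      rw [e1, e2]
      simp
    set j1 : ℕ := s / L0 with hj1def
    set t : ℕ := s % L0 with htdef
    have hst : j1 * L0 + t = s := by rw [hj1def, htdef, mul_comm]; exact Nat.div_add_mod s L0
    have htL0 : t < L0 := Nat.mod_lt s hL0
    have hsL : L ≤ s := by omega
    have hsn : s + n + L ≤ W.length := by omega
    have hj1m : m + 2 ≤ j1 := by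
      rw [hj1def]
      rw [Nat.le_div_iff_mul_le hL0]
      calc (m + 2) * L0 = L := by rw [hLdef]; ring
        _ ≤ s := hsL
    have hj2 : j1 + 2 + m ≤ C.length := by
      have h1 : (j1 + 2 + m) * L0 ≤ s + (2 + m) * L0 := by nlinarith
      have h2 : (2 + m) * L0 ≤ L := by rw [hLdef]; nlinarith
      have h3 : (j1 + 2 + m) * L0 ≤ C.length * L0 := by omega
      exact Nat.le_of_mul_le_mul_right h3 hL0
    have hj1C : j1 < C.length := by omega
    have hj1C' : j1 + 1 < C.length := by omega
    have hCV : C.length = V.length := hC1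
    set B1 : List A := C[j1]'hj1C with hB1def
    set B2 : List A := C[j1+1]'hj1C' with hB2def
    have hB1 : B1 ∈ substPow θ k (V[j1]'(by omega)) := hC2 j1 hj1C (by omega)
    have hB2 : B2 ∈ substPow θ k (V[j1+1]'(by omega)) := hC2 (j1+1) hj1C' (by omega)
    have hB1len : B1.length = L0 := hCall B1 (List.getElem_mem hj1C)
    have hB2len : B2.length = L0 := hCall B2 (List.getElem_mem hj1C')
    have hu3 : u = ((B1 ++ B2).drop t).take n := by
      rw [hu2]
      have h1 : W.drop s = (W.drop (j1 * L0)).drop t := by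
        rw [List.drop_drop]
        congr 1
        omega
      rw [h1, hWC, flatten_drop hCall j1]
      have h2 : C.drop j1 = B1 :: B2 :: C.drop (j1 + 2) := by
        rw [List.drop_eq_getElem_cons hj1C, ← hB1def]
        congr 1
        rw [List.drop_eq_getElem_cons hj1C', ← hB2def]
      rw [h2]
      show (((B1 ++ (B2 ++ (C.drop (j1+2)).flatten)).drop t).take n) = _
      rw [← List.append_assoc]
      rw [List.drop_append]
      have e1 : t - (B1 ++ B2).length = 0 := by
        rw [List.length_append]; omega
      rw [e1, List.drop_zero, List.take_append]
      have e2 : n - ((B1 ++ B2).drop t).length = 0 := by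
        rw [List.length_drop, List.length_append]; omega
      rw [e2]
      simp
    refine ⟨V[j1]'(by omega), V[j1+1]'(by omega), t, B1, B2, htL0, hB1, hB2, hu3, ?_, ?_⟩
    · exact ⟨V, j1, by omega, legal_of_mem_substPow hV, by omega, by omega, rfl⟩
    · exact ⟨V, j1 + 1, by omega, legal_of_mem_substPow hV, by omega, by omega, rfl⟩
  -- pigeonhole over the finite tuple space
  choose c1f c2f tf B1f B2f h1 h2 h3 h4 h5 h6 using main
  let U := Ultrafilter.of (atTop : Filter ℕ)
  have hU : (U : Filter ℕ) ≤ atTop := Ultrafilter.of_le _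
  set Θk : Finset (List A) := Finset.univ.biUnion (fun c => substPow θ k c) with hΘk
  set S : Finset (A × A × ℕ × List A × List A) :=
    Finset.univ ×ˢ Finset.univ ×ˢ Finset.range L0 ×ˢ Θk ×ˢ Θk with hSdef
  set g : ℕ → A × A × ℕ × List A × List A :=
    fun m => (c1f m, c2f m, tf m, B1f m, B2f m) with hgdef
  have hgS : {m | g m ∈ S} ∈ U := by
    have : ∀ m, g m ∈ S := by
      intro m
      simp only [hSdef, hgdef, Finset.mem_product, Finset.mem_univ, Finset.mem_range, true_and]
      exact ⟨h1 m, Finset.mem_biUnion.2 ⟨c1f m, Finset.mem_univ _, h2 m⟩,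
        Finset.mem_biUnion.2 ⟨c2f m, Finset.mem_univ _, h3 m⟩⟩
    have : {m | g m ∈ S} = Set.univ := Set.eq_univ_of_forall this
    rw [this]
    exact Filter.univ_mem
  obtain ⟨ω, hωS, hfib⟩ := ultra_exists_const U S g hgS
  obtain ⟨c1, c2, t, B1, B2⟩ := ω
  have hget : ∀ m0 : ℕ, ∃ m, m0 ≤ m ∧ c1f m = c1 ∧ c2f m = c2 ∧ tf m = t ∧
      B1f m = B1 ∧ B2f m = B2 := by
    intro m0
    have hge : {m | m0 ≤ m} ∈ U := hU (Filter.eventually_ge_atTop m0)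
    obtain ⟨m, hm1, hm2⟩ := Filter.nonempty_of_mem (Filter.inter_mem hfib hge)
    refine ⟨m, hm2, ?_⟩
    have := hm1
    simp only [hgdef, Set.mem_setOf_eq, Prod.mk.injEq] at this
    exact ⟨this.1, this.2.1, this.2.2.1, this.2.2.2.1, this.2.2.2.2⟩
  obtain ⟨m', _, e1, e2, e3, e4, e5⟩ := hget 0
  have hext1 : ExtLetter θ c1 := by
    intro m0
    obtain ⟨m, hm0, f1, _, _, _, _⟩ := hget m0
    obtain ⟨v, p, hpv, hvleg, hp1, hp2, hpc⟩ := h5 m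
    exact ⟨v, p, hpv, hvleg, by omega, by omega, by rw [hpc, f1]⟩
  have hext2 : ExtLetter θ c2 := by
    intro m0
    obtain ⟨m, hm0, _, f2, _, _, _⟩ := hget m0
    obtain ⟨v, p, hpv, hvleg, hp1, hp2, hpc⟩ := h6 m
    exact ⟨v, p, hpv, hvleg, by omega, by omega, by rw [hpc, f2]⟩
  refine ⟨c1, c2, t, B1, B2, lang_of_extLetter hext1, lang_of_extLetter hext2,
    ?_, ?_, ?_, ?_⟩
  · rw [← e3]; exact h1 m'
  · rw [← e4, ← e1]; exact h2 m'
  · rw [← e5, ← e2]; exact h3 m'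
  · rw [← e3, ← e4, ← e5]; exact h4 m'


/-! ### Complexity bounds -/

theorem complexity_finite [Fintype A] (X : Set (ℤ → A)) (n : ℕ) :
    Finite ↥{u : List A | u.length = n ∧ u ∈ lang X} := by
  classical
  refine Finite.of_injective
    (fun u : ↥{u : List A | u.length = n ∧ u ∈ lang X} =>
      fun i : Fin n => u.1.get ⟨i, by rw [u.2.1]; exact i.2⟩) ?_
  intro u v huv
  ext1
  apply List.ext_getElem (by rw [u.2.1, v.2.1])
  intro j hj1 hj2
  have := congrFun huv ⟨j, by rw [← u.2.1]; exact hj1⟩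
  simpa [List.get_eq_getElem] using this

theorem complexity_le_card_pow [Fintype A] (X : Set (ℤ → A)) (n : ℕ) :
    complexity X n ≤ (Fintype.card A) ^ n := by
  classical
  have h := Nat.card_le_card_of_injective
    (fun u : ↥{u : List A | u.length = n ∧ u ∈ lang X} =>
      fun i : Fin n => u.1.get ⟨i, by rw [u.2.1]; exact i.2⟩) ?_
  · calc complexity X n = Nat.card ↥{u : List A | u.length = n ∧ u ∈ lang X} := rfl
      _ ≤ Nat.card (Fin n → A) := h
      _ = (Fintype.card A) ^ n := by
          rw [Nat.card_eq_fintype_card, Fintype.card_fun, Fintype.card_fin]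
  · intro u v huv
    ext1
    apply List.ext_getElem (by rw [u.2.1, v.2.1])
    intro j hj1 hj2
    have := congrFun huv ⟨j, by rw [← u.2.1]; exact hj1⟩
    simpa [List.get_eq_getElem] using this

theorem finset_card_le_complexity [Fintype A] (X : Set (ℤ → A)) (n : ℕ)
    (F : Finset (List A)) (hF : ∀ w ∈ F, w.length = n ∧ w ∈ lang X) :
    F.card ≤ complexity X n := by
  classical
  have hfin : Finite ↥{u : List A | u.length = n ∧ u ∈ lang X} := complexity_finite X n
  have h : F.card = Nat.card {w : List A // w ∈ F} := by
    rw [Nat.card_eq_fintype_card, Fintype.card_coe]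
  rw [h]
  refine Nat.card_le_card_of_injective
    (fun w : {w : List A // w ∈ F} =>
      (⟨w.1, hF w.1 w.2⟩ : ↥{u : List A | u.length = n ∧ u ∈ lang X})) ?_
  intro w w' hww'
  ext1
  simpa using congrArg Subtype.val hww' 

theorem entropy_term_nonneg {B : Type*} (X : Set (ℤ → B)) (n : ℕ) :
    0 ≤ Real.log (complexity X n) / n := by
  apply div_nonneg _ (Nat.cast_nonneg n)
  rcases Nat.eq_zero_or_pos (complexity X n) with h | h
  · simp [h]
  · exact Real.log_nonneg (by exact_mod_cast h)

theorem entropy_bddAbove [Fintype A] (X : Set (ℤ → A)) :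
    IsBoundedUnder (· ≤ ·) atTop (fun n : ℕ => Real.log (complexity X n) / n) := by
  refine ⟨max 0 (Real.log (Fintype.card A)), Filter.eventually_map.2 ?_⟩
  refine Filter.Eventually.of_forall fun n => ?_
  rcases Nat.eq_zero_or_pos n with hn | hn
  · simp [hn]
  rcases Nat.eq_zero_or_pos (complexity X n) with h | h
  · simp [h]
  have h1 : (complexity X n : ℝ) ≤ ((Fintype.card A : ℕ) : ℝ) ^ n := by
    exact_mod_cast (complexity_le_card_pow X n)
  have h2 : Real.log (complexity X n) ≤ n * Real.log (Fintype.card A) := by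
    calc Real.log (complexity X n) ≤ Real.log (((Fintype.card A : ℕ) : ℝ) ^ n) :=
          Real.log_le_log (by exact_mod_cast h) h1
      _ = n * Real.log (Fintype.card A) := by rw [Real.log_pow]
  have h3 : Real.log (complexity X n) / n ≤ Real.log (Fintype.card A) := by
    rw [div_le_iff₀ (by exact_mod_cast hn)]
    linarith [h2]
  exact h3.trans (le_max_right _ _)

theorem two_pow_count_le_card_wordSubst {θ : A → Finset (List A)} (hne : ∀ a, (θ a).Nonempty)
    {ℓ : ℕ} (hlen : ∀ a : A, ∀ w ∈ θ a, w.length = ℓ) {a : A} (ha : 2 ≤ (θ a).card)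
    (u : List A) : 2 ^ (u.count a) ≤ (wordSubst θ u).card := by
  induction u with
  | nil => simp [mem_wordSubst_nil, wordSubst]
  | cons c u ih =>
      rw [card_wordSubst_cons hlen]
      by_cases hca : c = a
      · subst hca
        rw [List.count_cons_self, pow_succ, mul_comm]
        exact Nat.mul_le_mul ha ih
      · rw [List.count_cons_of_ne hca]
        calc 2 ^ (u.count a) ≤ (wordSubst θ u).card := ih
          _ ≤ (θ c).card * (wordSubst θ u).card := by
              have := Finset.card_pos.2 (hne c)
              nlinarith


/-! ### The easy direction: positive entropy from a PLFV charging a branching letter -/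

set_option maxHeartbeats 1000000 in
theorem entropy_pos_of_plfv [Fintype A] {θ : A → Finset (List A)} (hne : ∀ a, (θ a).Nonempty)
    {ℓ : ℕ} (hCL : ConstantLength θ ℓ) {ν : A → ℝ} (hν : IsPLFV θ ν) {a : A}
    (hνa : 0 < ν a) (hcard : 2 ≤ (θ a).card) :
    0 < topEntropy (substShift θ) := by
  obtain ⟨hℓ2, hlen⟩ := hCL
  have hℓ0 : 0 < ℓ := by omega
  obtain ⟨hIcc, b, hb, nseq, hnseq, v, hvmem, hfreq⟩ := hν
  set X := substShift θ
  set f : ℕ → ℝ := fun n => Real.log (complexity X n) / n with hfdef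
  set δ : ℝ := ν a * Real.log 2 / (2 * ℓ) with hδdef
  have hδ0 : 0 < δ := by
    rw [hδdef]
    have h2 : (0:ℝ) < Real.log 2 := Real.log_pos (by norm_num)
    positivity
  have hvlen : ∀ k, (v k).length = ℓ ^ (nseq k) := fun k =>
    length_of_mem_substPow hlen (hvmem k)
  -- eventually the count of a is large
  have hcnt : ∀ᶠ k in atTop, (ν a / 2) * ((v k).length : ℝ) ≤ ((v k).count a : ℝ) := by
    have h1 : ∀ᶠ k in atTop, ν a / 2 < ((v k).count a : ℝ) / ((v k).length : ℝ) :=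
      (hfreq a).eventually (lt_mem_nhds (by linarith))
    refine h1.mono fun k hk => ?_
    have hlp : (0:ℝ) < ((v k).length : ℝ) := by
      rw [hvlen k]
      positivity
    exact ((lt_div_iff₀ hlp).1 hk).le
  -- the bound at scale ℓ^(nseq k + 1)
  have hbig : ∀ᶠ k in atTop, δ ≤ f (ℓ ^ (nseq k + 1)) := by
    refine hcnt.mono fun k hk => ?_
    set N : ℕ := ℓ ^ (nseq k + 1) with hNdef
    have hN0 : 0 < N := pow_pos hℓ0 _
    -- the finset of realisations
    set F : Finset (List A) := wordSubst θ (v k) with hFdef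
    have hFsub : ∀ w ∈ F, w.length = N ∧ w ∈ lang X := by
      intro w hw
      constructor
      · rw [length_of_mem_wordSubst hlen hw, hvlen k, hNdef, pow_succ, mul_comm]
      · exact mem_lang_substPow hne hℓ0 hlen hb (nseq k + 1) w
          (wordSubst_subset_substPow_succ (hvmem k) hw)
    have hcard1 : 2 ^ ((v k).count a) ≤ complexity X N :=
      le_trans (two_pow_count_le_card_wordSubst hne hlen hcard (v k))
        (finset_card_le_complexity X N F hFsub)
    have hlog : ((v k).count a : ℝ) * Real.log 2 ≤ Real.log (complexity X N) := by
      have h1 : ((2 ^ ((v k).count a) : ℕ) : ℝ) ≤ ((complexity X N : ℕ) : ℝ) := by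
        exact_mod_cast hcard1
      have h2 := Real.log_le_log (by positivity) h1
      rwa [show ((2 ^ ((v k).count a) : ℕ) : ℝ) = (2:ℝ) ^ ((v k).count a) by push_cast; ring,
        Real.log_pow] at h2
    -- δ * N ≤ log complexity
    have hNlen : (N : ℝ) = ℓ * ((v k).length : ℝ) := by
      rw [hNdef, hvlen k]
      push_cast [pow_succ]
      ring
    have hkey : δ * N ≤ Real.log (complexity X N) := by
      have e1 : δ * (N:ℝ) = (ν a / 2) * ((v k).length : ℝ) * Real.log 2 := by
        rw [hδdef, hNlen]
        have : (ℓ:ℝ) ≠ 0 := by positivity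
        field_simp
      rw [e1]
      calc (ν a / 2) * ((v k).length : ℝ) * Real.log 2
          ≤ ((v k).count a : ℝ) * Real.log 2 := by
            apply mul_le_mul_of_nonneg_right hk (Real.log_nonneg (by norm_num))
        _ ≤ _ := hlog
    rw [hfdef]
    rw [le_div_iff₀ (by exact_mod_cast hN0)]
    linarith [hkey]
  -- frequently in n
  have hnseq1 : Tendsto (fun k => nseq k + 1) atTop atTop :=
    tendsto_atTop_mono (fun k => Nat.le_succ (nseq k)) hnseq
  have hten : Tendsto (fun k => ℓ ^ (nseq k + 1)) atTop atTop :=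
    (tendsto_pow_atTop_atTop_of_one_lt (r := ℓ) (by omega)).comp hnseq1
  have hfreq2 : ∃ᶠ N in atTop, δ ≤ f N := hten.frequently hbig.frequently
  have hlim : δ ≤ topEntropy X := le_limsup_of_frequently_le hfreq2 (entropy_bddAbove X)
  linarith


/-! ### Hard direction: counting machinery -/

section Hard

variable [Fintype A] {θ : A → Finset (List A)}

/-- Letters with at least two realisations. -/
noncomputable def Dset (θ : A → Finset (List A)) : Finset A :=
  Finset.univ.filter (fun a => 2 ≤ (θ a).card)

/-- Total number of occurrences of branching letters. -/
noncomputable def countD (θ : A → Finset (List A)) (w : List A) : ℕ :=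
  ∑ a ∈ Dset θ, w.count a

/-- Max number of branching letters over realisations of `θ^k(c)`. -/
noncomputable def Dmax (θ : A → Finset (List A)) (k : ℕ) (c : A) : ℕ :=
  (substPow θ k c).sup (countD θ)

/-- A uniform bound on the number of realisations of a letter. -/
noncomputable def Mbig (θ : A → Finset (List A)) : ℕ :=
  (Finset.univ.sup fun a : A => (θ a).card) ⊔ 1

theorem one_le_Mbig : 1 ≤ Mbig θ := le_sup_right

theorem card_le_Mbig (a : A) : (θ a).card ≤ Mbig θ :=
  le_trans (Finset.le_sup (f := fun a : A => (θ a).card) (Finset.mem_univ a)) le_sup_left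

theorem countD_cons (c : A) (w : List A) :
    countD θ (c :: w) = countD θ w + (if c ∈ Dset θ then 1 else 0) := by
  classical
  unfold countD
  have h1 : ∀ a, List.count a (c :: w) = List.count a w + if a = c then 1 else 0 := by
    intro a
    by_cases hac : a = c
    · subst hac; simp [List.count_cons]
    · simp [List.count_cons, hac, Ne.symm hac]
  rw [Finset.sum_congr rfl (fun a _ => h1 a), Finset.sum_add_distrib]
  congr 1
  rw [Finset.sum_ite_eq' (Dset θ) c (fun _ => 1)]

theorem countD_le_length (w : List A) : countD θ w ≤ w.length := by
  classical
  induction w with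
  | nil => simp [countD]
  | cons c w ih =>
      rw [countD_cons, List.length_cons]
      by_cases h : c ∈ Dset θ <;> simp [h] <;> omega

theorem card_wordSubst_le_Mbig_pow (hne : ∀ a, (θ a).Nonempty)
    {ℓ : ℕ} (hlen : ∀ a : A, ∀ w ∈ θ a, w.length = ℓ) (w : List A) :
    (wordSubst θ w).card ≤ (Mbig θ) ^ (countD θ w) := by
  classical
  induction w with
  | nil => simp [wordSubst, countD]
  | cons c w ih =>
      rw [card_wordSubst_cons hlen, countD_cons]
      by_cases h : c ∈ Dset θ
      · rw [if_pos h, pow_add, pow_one]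
        calc (θ c).card * (wordSubst θ w).card ≤ Mbig θ * Mbig θ ^ countD θ w :=
              Nat.mul_le_mul (card_le_Mbig c) ih
          _ = Mbig θ ^ countD θ w * Mbig θ := mul_comm _ _
      · rw [if_neg h, add_zero]
        have hc1 : (θ c).card ≤ 1 := by
          by_contra hc
          exact h (Finset.mem_filter.2 ⟨Finset.mem_univ c, by omega⟩)
        calc (θ c).card * (wordSubst θ w).card ≤ 1 * (wordSubst θ w).card :=
              Nat.mul_le_mul_right _ hc1
          _ = (wordSubst θ w).card := one_mul _
          _ ≤ _ := ih

theorem card_substPow_le (hne : ∀ a, (θ a).Nonempty)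
    {ℓ : ℕ} (hlen : ∀ a : A, ∀ w ∈ θ a, w.length = ℓ) (c : A) (k : ℕ) :
    (substPow θ k c).card ≤ (Mbig θ) ^ (∑ j ∈ Finset.range k, Dmax θ j c) := by
  classical
  induction k with
  | zero => simp [substPow_zero]
  | succ k ih =>
      rw [substPow_succ]
      calc ((substPow θ k c).biUnion fun v => wordSubst θ v).card
          ≤ ∑ v ∈ substPow θ k c, (wordSubst θ v).card := Finset.card_biUnion_le
        _ ≤ ∑ v ∈ substPow θ k c, (Mbig θ) ^ (Dmax θ k c) := by
            refine Finset.sum_le_sum fun v hv => ?_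
            exact le_trans (card_wordSubst_le_Mbig_pow hne hlen v)
              (Nat.pow_le_pow_right one_le_Mbig (Finset.le_sup hv))
        _ = (substPow θ k c).card * (Mbig θ) ^ (Dmax θ k c) := by
            rw [Finset.sum_const, smul_eq_mul]
        _ ≤ (Mbig θ) ^ (∑ j ∈ Finset.range k, Dmax θ j c) * (Mbig θ) ^ (Dmax θ k c) :=
            Nat.mul_le_mul_right _ ih
        _ = _ := by rw [Finset.sum_range_succ, pow_add]

/-- If no permissible vector charges a branching letter, the `D`-frequency in inflation
words of shift-legal letters tends to zero. -/
theorem Dfreq_tendsto_zero (hne : ∀ a, (θ a).Nonempty)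
    {ℓ : ℕ} (hℓ2 : 2 ≤ ℓ) (hlen : ∀ a : A, ∀ w ∈ θ a, w.length = ℓ)
    (hno : ∀ ν : A → ℝ, IsPLFV θ ν → ∀ a : A, 0 < ν a → ¬ 2 ≤ (θ a).card)
    {c : A} (hc : [c] ∈ lang (substShift θ)) :
    Tendsto (fun k => (Dmax θ k c : ℝ) / (ℓ:ℝ) ^ k) atTop (𝓝 0) := by
  classical
  by_contra hcon
  have hnonneg : ∀ k, 0 ≤ (Dmax θ k c : ℝ) / (ℓ:ℝ) ^ k := fun k => by positivity
  rw [Metric.tendsto_atTop] at hcon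
  push_neg at hcon
  obtain ⟨ε, hε, hεfr⟩ := hcon
  have hfr : ∃ᶠ k in atTop, ε ≤ (Dmax θ k c : ℝ) / (ℓ:ℝ) ^ k := by
    rw [Filter.frequently_atTop]
    intro N
    obtain ⟨k, hkN, hk⟩ := hεfr N
    refine ⟨k, hkN, ?_⟩
    rw [Real.dist_eq, sub_zero, abs_of_nonneg (hnonneg k)] at hk
    exact hk
  obtain ⟨φ, hφmono, hφ⟩ := extraction_of_frequently_atTop hfr
  have hwex : ∀ j : ℕ, ∃ w ∈ substPow θ (φ j) c, Dmax θ (φ j) c = countD θ w := fun j =>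
    Finset.exists_mem_eq_sup _ (substPow_nonempty hne (φ j) c) (countD θ)
  choose w hwmem hwcnt using hwex
  have hwlen : ∀ j, (w j).length = ℓ ^ (φ j) := fun j =>
    length_of_mem_substPow hlen (hwmem j)
  have hwlen0 : ∀ j, (0:ℝ) < ((w j).length : ℝ) := by
    intro j
    rw [hwlen j]
    positivity
  set freq : ℕ → (A → ℝ) := fun j a => ((w j).count a : ℝ) / ((w j).length : ℝ) with hfreqdef
  have hfreqmem : ∀ j, freq j ∈ Set.univ.pi (fun _ : A => Set.Icc (0:ℝ) 1) := by
    intro j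
    rw [Set.mem_univ_pi]
    intro a
    refine ⟨by positivity, ?_⟩
    rw [div_le_one (hwlen0 j)]
    exact_mod_cast List.count_le_length
  obtain ⟨ν, hνmem, ψ, hψmono, hψtend⟩ :=
    (isCompact_univ_pi fun _ : A => isCompact_Icc).tendsto_subseq hfreqmem
  have hνIcc : ∀ a, ν a ∈ Set.Icc (0:ℝ) 1 := fun a => (Set.mem_univ_pi.1 hνmem) a
  have hcoord : ∀ a, Tendsto (fun j => freq (ψ j) a) atTop (𝓝 (ν a)) := fun a =>
    (tendsto_pi_nhds.1 hψtend) a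
  have hPLFV : IsPLFV θ ν := by
    refine ⟨hνIcc, c, hc, fun j => φ (ψ j), (hφmono.comp hψmono).tendsto_atTop,
      fun j => w (ψ j), fun j => hwmem (ψ j), fun a => hcoord a⟩
  have hzero : ∀ a ∈ Dset θ, ν a = 0 := by
    intro a ha
    have h2 : 2 ≤ (θ a).card := (Finset.mem_filter.1 ha).2
    have := hno ν hPLFV a
    have hle : ¬ 0 < ν a := fun hpos => (this hpos) h2
    push_neg at hle
    exact le_antisymm hle (hνIcc a).1
  -- but the D-sum of frequencies stays above ε
  have hsumt : Tendsto (fun j => ∑ a ∈ Dset θ, freq (ψ j) a) atTop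
      (𝓝 (∑ a ∈ Dset θ, ν a)) := tendsto_finset_sum _ fun a _ => hcoord a
  have hsumge : ε ≤ ∑ a ∈ Dset θ, ν a := by
    refine ge_of_tendsto hsumt (Filter.Eventually.of_forall fun j => ?_)
    have h1 : ∑ a ∈ Dset θ, freq (ψ j) a
        = (countD θ (w (ψ j)) : ℝ) / ((w (ψ j)).length : ℝ) := by
      rw [hfreqdef]
      rw [← Finset.sum_div]
      congr 1
      rw [countD]
      push_cast
      rfl
    rw [h1, ← hwcnt (ψ j), hwlen (ψ j)]
    exact_mod_cast hφ (ψ j)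
  rw [Finset.sum_congr rfl hzero, Finset.sum_const, smul_zero] at hsumge
  linarith

/-- Cesàro-type estimate for geometrically weighted sums. -/
theorem cesaro {ℓ : ℕ} (hℓ2 : 2 ≤ ℓ) (d : ℕ → ℝ) (hd0 : ∀ j, 0 ≤ d j)
    (h : Tendsto (fun j => d j / (ℓ:ℝ) ^ j) atTop (𝓝 0)) :
    Tendsto (fun K => (∑ j ∈ Finset.range K, d j) / (ℓ:ℝ) ^ K) atTop (𝓝 0) := by
  have hℓ1 : (1:ℝ) < (ℓ:ℝ) := by exact_mod_cast (by omega : 1 < ℓ)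
  have hℓ0 : (0:ℝ) < (ℓ:ℝ) := by linarith
  rw [Metric.tendsto_atTop]
  intro ε hε
  rw [Metric.tendsto_atTop] at h
  obtain ⟨J, hJ⟩ := h (ε/4) (by linarith)
  have hJ' : ∀ j, J ≤ j → d j ≤ (ε/4) * (ℓ:ℝ)^j := by
    intro j hj
    have := hJ j hj
    rw [Real.dist_eq, sub_zero,
      abs_of_nonneg (div_nonneg (hd0 j) (by positivity))] at this
    have hp : (0:ℝ) < (ℓ:ℝ)^j := by positivity
    rw [div_lt_iff₀ hp] at this
    linarith
  set C : ℝ := ∑ j ∈ Finset.range J, d j with hCdef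
  have hC0 : 0 ≤ C := Finset.sum_nonneg fun j _ => hd0 j
  have hgeo : Tendsto (fun K => C / (ℓ:ℝ)^K) atTop (𝓝 0) := by
    have h1 : Tendsto (fun K : ℕ => ((ℓ:ℝ)⁻¹)^K) atTop (𝓝 0) :=
      tendsto_pow_atTop_nhds_zero_of_lt_one (by positivity) (by
        rw [inv_lt_one_iff₀]; right; exact hℓ1)
    have h2 := h1.const_mul C
    rw [mul_zero] at h2
    refine h2.congr fun K => ?_
    rw [div_eq_mul_inv, inv_pow]
  rw [Metric.tendsto_atTop] at hgeo
  obtain ⟨K0, hK0⟩ := hgeo (ε/2) (by linarith)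
  refine ⟨max J K0, fun K hK => ?_⟩
  have hJK : J ≤ K := le_trans (le_max_left _ _) hK
  have hK0K : K0 ≤ K := le_trans (le_max_right _ _) hK
  have hsplit : ∑ j ∈ Finset.range K, d j = C + ∑ j ∈ Finset.Ico J K, d j := by
    rw [hCdef, Finset.range_eq_Ico, Finset.range_eq_Ico,
      Finset.sum_Ico_consecutive _ (Nat.zero_le J) hJK]
  have hb1 : ∑ j ∈ Finset.Ico J K, d j ≤ (ε/4) * ∑ j ∈ Finset.range K, (ℓ:ℝ)^j := by
    calc ∑ j ∈ Finset.Ico J K, d j ≤ ∑ j ∈ Finset.Ico J K, (ε/4) * (ℓ:ℝ)^j :=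
          Finset.sum_le_sum fun j hj => hJ' j (Finset.mem_Ico.1 hj).1
      _ ≤ ∑ j ∈ Finset.range K, (ε/4) * (ℓ:ℝ)^j := by
          refine Finset.sum_le_sum_of_subset_of_nonneg ?_ (fun j _ _ => by positivity)
          rw [Finset.range_eq_Ico]
          exact Finset.Ico_subset_Ico (Nat.zero_le J) le_rfl
      _ = (ε/4) * ∑ j ∈ Finset.range K, (ℓ:ℝ)^j := by rw [Finset.mul_sum]
  have hgsum : ∑ j ∈ Finset.range K, (ℓ:ℝ)^j ≤ (ℓ:ℝ)^K := by
    rw [geom_sum_eq (ne_of_gt hℓ1)]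
    have hc2 : (2:ℝ) ≤ (ℓ:ℝ) := by exact_mod_cast hℓ2
    have h1 : (1:ℝ) ≤ (ℓ:ℝ) - 1 := by linarith
    have h2 : (0:ℝ) ≤ (ℓ:ℝ)^K - 1 := by
      have h3 : (1:ℝ) ≤ (ℓ:ℝ)^K := one_le_pow₀ (by linarith)
      linarith
    calc ((ℓ:ℝ)^K - 1)/((ℓ:ℝ) - 1) ≤ ((ℓ:ℝ)^K - 1)/1 := by
          apply div_le_div_of_nonneg_left h2 (by linarith) h1
      _ ≤ (ℓ:ℝ)^K := by simp
  have hpK : (0:ℝ) < (ℓ:ℝ)^K := by positivity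
  have hfinal : (∑ j ∈ Finset.range K, d j) / (ℓ:ℝ)^K < ε := by
    rw [hsplit, add_div]
    have h1 : C / (ℓ:ℝ)^K < ε/2 := by
      have := hK0 K hK0K
      rwa [Real.dist_eq, sub_zero, abs_of_nonneg (by positivity)] at this
    have h2 : (∑ j ∈ Finset.Ico J K, d j) / (ℓ:ℝ)^K ≤ ε/4 := by
      rw [div_le_iff₀ hpK]
      calc ∑ j ∈ Finset.Ico J K, d j ≤ (ε/4) * ∑ j ∈ Finset.range K, (ℓ:ℝ)^j := hb1
        _ ≤ (ε/4) * (ℓ:ℝ)^K := by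
            apply mul_le_mul_of_nonneg_left hgsum (by linarith)
    linarith
  rw [Real.dist_eq, sub_zero, abs_of_nonneg
    (div_nonneg (Finset.sum_nonneg fun j _ => hd0 j) (by positivity))]
  exact hfinal

end Hard


/-! ### Hard direction: assembly -/

section Hard2

variable [Fintype A]

/-- Shift-legal letters. -/
noncomputable def Fb (θ : A → Finset (List A)) : Finset A :=
  @Finset.filter _ (fun c => [c] ∈ lang (substShift θ)) (Classical.decPred _) Finset.univ

theorem mem_Fb {θ : A → Finset (List A)} {c : A} :
    c ∈ Fb θ ↔ [c] ∈ lang (substShift θ) := by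
  letI := Classical.decPred (fun c : A => [c] ∈ lang (substShift θ))
  unfold Fb
  rw [Finset.mem_filter]
  simp

/-- Level-`k` inflation words of shift-legal letters. -/
noncomputable def ThetaG (θ : A → Finset (List A)) (k : ℕ) : Finset (List A) :=
  (Fb θ).biUnion (fun c => substPow θ k c)

/-- Cumulative branching-count bound. -/
noncomputable def Gsum (θ : A → Finset (List A)) (k : ℕ) : ℕ :=
  ∑ c ∈ Fb θ, ∑ j ∈ Finset.range k, Dmax θ j c

theorem thetaG_card_le {θ : A → Finset (List A)} (hne : ∀ a, (θ a).Nonempty)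
    {ℓ : ℕ} (hlen : ∀ a : A, ∀ w ∈ θ a, w.length = ℓ) (k : ℕ) :
    (ThetaG θ k).card ≤ Fintype.card A * (Mbig θ) ^ (Gsum θ k) := by
  calc (ThetaG θ k).card ≤ ∑ c ∈ Fb θ, (substPow θ k c).card := Finset.card_biUnion_le
    _ ≤ ∑ c ∈ Fb θ, (Mbig θ) ^ (Gsum θ k) := by
        refine Finset.sum_le_sum fun c hc => ?_
        refine le_trans (card_substPow_le hne hlen c k) ?_
        refine Nat.pow_le_pow_right one_le_Mbig ?_
        show _ ≤ Gsum θ k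
        rw [Gsum]
        exact Finset.single_le_sum (f := fun c => ∑ j ∈ Finset.range k, Dmax θ j c)
          (fun c _ => Nat.zero_le _) hc
    _ = (Fb θ).card * (Mbig θ) ^ (Gsum θ k) := by rw [Finset.sum_const, smul_eq_mul]
    _ ≤ Fintype.card A * (Mbig θ) ^ (Gsum θ k) := by
        apply Nat.mul_le_mul_right
        exact le_trans (Finset.card_le_univ (Fb θ)) (le_of_eq (Finset.card_univ))

theorem complexity_le_blocks {θ : A → Finset (List A)} (hne : ∀ a, (θ a).Nonempty)
    {ℓ : ℕ} (hℓ2 : 2 ≤ ℓ) (hlen : ∀ a : A, ∀ w ∈ θ a, w.length = ℓ)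
    (k n : ℕ) (hn1 : 1 ≤ n) (hnk : n ≤ ℓ ^ k) :
    complexity (substShift θ) n ≤
      Fintype.card A * (Fintype.card A * (ℓ ^ k * ((ThetaG θ k).card * (ThetaG θ k).card))) := by
  classical
  set T := A × A × Fin (ℓ ^ k) × {B : List A // B ∈ ThetaG θ k} × {B : List A // B ∈ ThetaG θ k}
    with hTdef
  have hdec : ∀ u : ↥{u : List A | u.length = n ∧ u ∈ lang (substShift θ)},
      ∃ p : T, u.1 = ((p.2.2.2.1.1 ++ p.2.2.2.2.1).drop p.2.2.1.1).take n := by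
    intro u
    obtain ⟨c1, c2, t, B1, B2, hc1, hc2, ht, hB1, hB2, hu⟩ :=
      decomp hne hℓ2 hlen k n hn1 hnk u.2.2 u.2.1
    exact ⟨(c1, c2, ⟨t, ht⟩,
      ⟨B1, Finset.mem_biUnion.2 ⟨c1, mem_Fb.2 hc1, hB1⟩⟩,
      ⟨B2, Finset.mem_biUnion.2 ⟨c2, mem_Fb.2 hc2, hB2⟩⟩), hu⟩
  choose F hF using hdec
  have hinj : Function.Injective F := by
    intro u v huv
    ext1
    rw [hF u, hF v, huv]
  calc complexity (substShift θ) n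
      = Nat.card ↥{u : List A | u.length = n ∧ u ∈ lang (substShift θ)} := rfl
    _ ≤ Nat.card T := Nat.card_le_card_of_injective F hinj
    _ = _ := by
        rw [hTdef]
        simp [Nat.card_eq_fintype_card, Fintype.card_prod, Fintype.card_coe, Fintype.card_fin]

theorem tendsto_const_div_pow (C : ℝ) {ℓ : ℕ} (hℓ2 : 2 ≤ ℓ) :
    Tendsto (fun K : ℕ => C / (ℓ:ℝ) ^ K) atTop (𝓝 0) := by
  have hℓ1 : (1:ℝ) < (ℓ:ℝ) := by exact_mod_cast (by omega : 1 < ℓ)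
  have h1 : Tendsto (fun K : ℕ => ((ℓ:ℝ)⁻¹) ^ K) atTop (𝓝 0) :=
    tendsto_pow_atTop_nhds_zero_of_lt_one (by positivity) (by
      rw [inv_lt_one_iff₀]; right; exact hℓ1)
  have h2 := h1.const_mul C
  rw [mul_zero] at h2
  refine h2.congr fun K => ?_
  rw [div_eq_mul_inv, inv_pow]

theorem tendsto_succ_div_pow {ℓ : ℕ} (hℓ2 : 2 ≤ ℓ) :
    Tendsto (fun K : ℕ => ((K:ℝ) + 1) / (ℓ:ℝ) ^ K) atTop (𝓝 0) := by
  have hℓ1 : (1:ℝ) < (ℓ:ℝ) := by exact_mod_cast (by omega : 1 < ℓ)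
  have hinv : ‖(ℓ:ℝ)⁻¹‖ < 1 := by
    rw [Real.norm_eq_abs, abs_of_pos (by positivity), inv_lt_one_iff₀]
    right; exact hℓ1
  have hs : Summable (fun K : ℕ => (K:ℝ) ^ 1 * ((ℓ:ℝ)⁻¹) ^ K) :=
    summable_pow_mul_geometric_of_norm_lt_one 1 hinv
  have h1 : Tendsto (fun K : ℕ => (K:ℝ) ^ 1 * ((ℓ:ℝ)⁻¹) ^ K) atTop (𝓝 0) :=
    hs.tendsto_atTop_zero
  have h2 : Tendsto (fun K : ℕ => ((ℓ:ℝ)⁻¹) ^ K) atTop (𝓝 0) :=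
    tendsto_pow_atTop_nhds_zero_of_lt_one (by positivity) (by
      rw [inv_lt_one_iff₀]; right; exact hℓ1)
  have h3 := h1.add h2
  rw [add_zero] at h3
  refine h3.congr fun K => ?_
  rw [pow_one, inv_pow, div_eq_mul_inv]
  ring

theorem entropy_nonpos {θ : A → Finset (List A)} (hne : ∀ a, (θ a).Nonempty)
    {ℓ : ℕ} (hℓ2 : 2 ≤ ℓ) (hlen : ∀ a : A, ∀ w ∈ θ a, w.length = ℓ)
    (hno : ∀ ν : A → ℝ, IsPLFV θ ν → ∀ a : A, 0 < ν a → ¬ 2 ≤ (θ a).card) :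
    topEntropy (substShift θ) ≤ 0 := by
  classical
  set X := substShift θ with hXdef
  set f : ℕ → ℝ := fun n => Real.log (complexity X n) / n with hfdef
  have hent : topEntropy X = atTop.limsup f := rfl
  rcases isEmpty_or_nonempty A with hA | hA
  · -- empty alphabet: complexity vanishes
    have hf0 : ∀ n, f n = 0 := by
      intro n
      cases n with
      | zero => simp [hfdef]
      | succ m =>
          have hempty : {u : List A | u.length = m + 1 ∧ u ∈ lang X} = ∅ := by
            ext u
            simp only [Set.mem_setOf_eq, Set.mem_empty_iff_false, iff_false]
            rintro ⟨hlen1, -⟩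
            cases u with
            | nil => simp at hlen1
            | cons a u => exact hA.elim a
          rw [hfdef]
          simp [complexity, hempty]
    have hfconst : f = fun _ => (0:ℝ) := funext hf0
    rw [hent, hfconst]
    exact le_of_eq (Filter.Tendsto.limsup_eq tendsto_const_nhds)
  · -- nonempty alphabet
    set CA := Fintype.card A with hCAdef
    have hCA1 : 1 ≤ CA := Fintype.card_pos
    have hM1 : 1 ≤ Mbig θ := one_le_Mbig
    have hℓ1 : 1 < ℓ := by omega
    -- the numerator function
    set numer : ℕ → ℝ := fun K =>
      4 * Real.log CA + K * Real.log ℓ + 2 * (Gsum θ K) * Real.log (Mbig θ) with hnumerdef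
    have hnumer0 : ∀ K, 0 ≤ numer K := by
      intro K
      have h1 : (0:ℝ) ≤ Real.log CA := Real.log_natCast_nonneg _
      have h2 : (0:ℝ) ≤ Real.log ℓ := Real.log_natCast_nonneg _
      have h3 : (0:ℝ) ≤ Real.log (Mbig θ) := Real.log_natCast_nonneg _
      rw [hnumerdef]
      positivity
    -- complexity bound in ℝ, log form
    have hlogbound : ∀ n : ℕ, 1 ≤ n → Real.log (complexity X n) ≤ numer (Nat.log ℓ n + 1) := by
      intro n hn1
      set k := Nat.log ℓ n + 1 with hkdef
      have hnk : n ≤ ℓ ^ k := (Nat.lt_pow_succ_log_self hℓ1 n).le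
      have hb1 : complexity X n ≤ CA * (CA * (ℓ ^ k * ((ThetaG θ k).card * (ThetaG θ k).card))) :=
        complexity_le_blocks hne hℓ2 hlen k n hn1 hnk
      have hb2 : (ThetaG θ k).card ≤ CA * (Mbig θ) ^ (Gsum θ k) := thetaG_card_le hne hlen k
      have hb3 : complexity X n ≤ CA^4 * ℓ ^ k * ((Mbig θ) ^ (Gsum θ k))^2 := by
        calc complexity X n ≤ CA * (CA * (ℓ ^ k * ((ThetaG θ k).card * (ThetaG θ k).card))) := hb1
          _ ≤ CA * (CA * (ℓ ^ k * ((CA * (Mbig θ) ^ (Gsum θ k)) * (CA * (Mbig θ) ^ (Gsum θ k))))) := by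
              refine Nat.mul_le_mul_left _ (Nat.mul_le_mul_left _ (Nat.mul_le_mul_left _ ?_))
              exact Nat.mul_le_mul hb2 hb2
          _ = CA^4 * ℓ ^ k * ((Mbig θ) ^ (Gsum θ k))^2 := by ring
      rcases Nat.eq_zero_or_pos (complexity X n) with h0 | h0
      · rw [h0]
        simpa using hnumer0 k
      · have hcast : ((complexity X n : ℕ) : ℝ)
            ≤ ((CA:ℝ))^4 * ((ℓ:ℝ)) ^ k * (((Mbig θ : ℕ):ℝ) ^ (Gsum θ k))^2 := by
          exact_mod_cast hb3
        have hpos1 : (0:ℝ) < ((CA:ℝ))^4 := by positivity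
        have hpos2 : (0:ℝ) < ((ℓ:ℝ)) ^ k := by positivity
        have hMpos : (0:ℝ) < ((Mbig θ : ℕ):ℝ) := by exact_mod_cast hM1
        have hpos3 : (0:ℝ) < (((Mbig θ : ℕ):ℝ) ^ (Gsum θ k))^2 := by positivity
        calc Real.log (complexity X n)
            ≤ Real.log (((CA:ℝ))^4 * ((ℓ:ℝ)) ^ k * (((Mbig θ : ℕ):ℝ) ^ (Gsum θ k))^2) :=
              Real.log_le_log (by exact_mod_cast h0) hcast
          _ = 4 * Real.log CA + k * Real.log ℓ + (2 * (Gsum θ k)) * Real.log (Mbig θ) := by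
              rw [Real.log_mul (by positivity) (by positivity),
                Real.log_mul (by positivity) (by positivity)]
              simp only [Real.log_pow]
              push_cast
              ring_nf
          _ = numer k := by rw [hnumerdef]
    -- the comparison function g
    set h : ℕ → ℝ := fun K => numer (K + 1) / (ℓ:ℝ) ^ K with hhdef
    set g : ℕ → ℝ := fun n => h (Nat.log ℓ n) with hgdef
    have hfg : ∀ᶠ n in atTop, f n ≤ g n := by
      rw [Filter.eventually_atTop]
      refine ⟨1, fun n hn1 => ?_⟩
      have hlow : ℓ ^ (Nat.log ℓ n) ≤ n := Nat.pow_log_le_self ℓ (by omega)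
      have hlowR : ((ℓ:ℝ)) ^ (Nat.log ℓ n) ≤ (n:ℝ) := by exact_mod_cast hlow
      have hpow0 : (0:ℝ) < ((ℓ:ℝ)) ^ (Nat.log ℓ n) := by positivity
      rw [hfdef, hgdef, hhdef]
      exact div_le_div₀ (hnumer0 _) (hlogbound n hn1) hpow0 hlowR
    -- h tends to zero
    have hGten : Tendsto (fun K => ((Gsum θ K : ℕ):ℝ) / (ℓ:ℝ)^K) atTop (𝓝 0) := by
      have hform : ∀ K, ((Gsum θ K : ℕ):ℝ) / (ℓ:ℝ)^K
          = ∑ c ∈ Fb θ, ((∑ j ∈ Finset.range K, Dmax θ j c : ℕ):ℝ) / (ℓ:ℝ)^K := by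
        intro K
        rw [Gsum, Nat.cast_sum, Finset.sum_div]
      have hsum : Tendsto (fun K => ∑ c ∈ Fb θ,
          ((∑ j ∈ Finset.range K, Dmax θ j c : ℕ):ℝ) / (ℓ:ℝ)^K) atTop
          (𝓝 (∑ c ∈ Fb θ, 0)) := by
        refine tendsto_finset_sum _ fun c hc => ?_
        have hD := Dfreq_tendsto_zero hne hℓ2 hlen hno (mem_Fb.1 hc)
        have := cesaro hℓ2 (fun j => (Dmax θ j c : ℝ)) (fun j => by positivity) hD
        refine this.congr fun K => ?_
        rw [Nat.cast_sum]
      rw [Finset.sum_const, smul_zero] at hsum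
      exact (hsum.congr fun K => (hform K).symm)
    have hhten : Tendsto h atTop (𝓝 0) := by
      have p1 : Tendsto (fun K : ℕ => (4 * Real.log CA) / (ℓ:ℝ)^K) atTop (𝓝 0) :=
        tendsto_const_div_pow _ hℓ2
      have p2 : Tendsto (fun K : ℕ => (((K:ℝ)+1) / (ℓ:ℝ)^K) * Real.log ℓ) atTop (𝓝 0) := by
        have := (tendsto_succ_div_pow hℓ2).mul_const (Real.log ℓ)
        rwa [zero_mul] at this
      have p3 : Tendsto (fun K : ℕ => (2 * Real.log (Mbig θ) * (ℓ:ℝ))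
          * (((Gsum θ (K+1) : ℕ):ℝ) / (ℓ:ℝ)^(K+1))) atTop (𝓝 0) := by
        have hcomp := hGten.comp (tendsto_add_atTop_nat 1)
        have := hcomp.const_mul (2 * Real.log (Mbig θ) * (ℓ:ℝ))
        rwa [mul_zero] at this
      have hsum := (p1.add p2).add p3
      rw [add_zero, add_zero] at hsum
      refine hsum.congr fun K => ?_
      rw [hhdef, hnumerdef]
      have hℓ0 : ((ℓ:ℝ)) ≠ 0 := by positivity
      field_simp
      push_cast
      ring
    have hgten : Tendsto g atTop (𝓝 0) := by
      have hlogten : Tendsto (fun n => Nat.log ℓ n) atTop atTop := by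
        apply tendsto_atTop_atTop.2
        intro b
        refine ⟨ℓ^b, fun n hn => ?_⟩
        have hb1 : 1 ≤ ℓ^b := Nat.one_le_pow _ _ (by omega)
        exact (Nat.le_log_iff_pow_le hℓ1 (by omega)).2 hn
      exact hhten.comp hlogten
    have hcob : IsCoboundedUnder (· ≤ ·) atTop f :=
      IsCoboundedUnder.of_frequently_ge
        ((Filter.Eventually.of_forall fun n => entropy_term_nonneg X n).frequently)
    have hbdd : IsBoundedUnder (· ≤ ·) atTop g := hgten.isBoundedUnder_le
    rw [hent]
    calc atTop.limsup f ≤ atTop.limsup g := limsup_le_limsup hfg hcob hbdd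
      _ = 0 := hgten.limsup_eq

end Hard2

end RandSubAux

/-- a constant length random substitution subshift has positive topological
entropy iff some permissible letter frequency vector gives positive frequency to a letter
with at least two realisations. -/
theorem entropy_positive_iff {A : Type*} [Fintype A] [DecidableEq A]
    (θ : A → Finset (List A)) (hne : ∀ a, (θ a).Nonempty)
    (ℓ : ℕ) (hCL : ConstantLength θ ℓ) :
    0 < topEntropy (substShift θ) ↔
      ∃ ν : A → ℝ, IsPLFV θ ν ∧ ∃ a : A, 0 < ν a ∧ 2 ≤ (θ a).card := by
  constructor
  · intro hpos
    by_contra hno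
    push_neg at hno
    have hno' : ∀ ν : A → ℝ, IsPLFV θ ν → ∀ a : A, 0 < ν a → ¬ 2 ≤ (θ a).card := by
      intro ν hν a hνa h2
      have := hno ν hν a hνa
      omega
    have := RandSubAux.entropy_nonpos hne hCL.1 hCL.2 hno'
    linarith
  · rintro ⟨ν, hν, a, hνa, hcard⟩
    exact RandSubAux.entropy_pos_of_plfv hne hCL hν hνa hcard
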